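/- Byte-Pair Encoding is a (1/3)-approximation for the optimal pair encoding problem: for every string s and every k, bpe(s,k) ≥ OPT(s,k)/3. -/

import Mathlib

variable {α : Type*} [DecidableEq α]

/-- Full greedy left-to-right replacement of the pair `ab` by `c`. -/
def replace (a b c : α) : List α → List α
  | [] => []
  | [x] => [x]
  | x :: y :: rest =>
    if x = a ∧ y = b then c :: replace a b c rest
    else x :: replace a b c (y :: rest)

/-- Replacement of every occurrence of the symbol `c` by the pair `ab`. -/
def expand (a b c : α) : List α → List α
  | [] => []
  | x :: rest => if x = c then a :: b :: expand a b c rest else x :: expand a b c rest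

/-- `t` is obtained from `s` by one partial replacement rule (replacing some
non-overlapping occurrences of a pair `ab` by a symbol `c`, invertibly). -/
def PartialStep (s t : List α) : Prop := ∃ a b c : α, expand a b c t = s

/-- `t` is obtained from `s` by one full merge of a pair `ab` into a fresh symbol `c`. -/
def FullStep (s t : List α) : Prop := ∃ a b c : α, c ∉ s ∧ t = replace a b c s

/-- A greedy (BPE) step: a full merge minimizing the resulting length. -/
def GreedyStep (s t : List α) : Prop :=
  FullStep s t ∧ ∀ u : List α, FullStep s u → t.length ≤ u.length

/-- `t` is obtained from `s` by a partial merge sequence of length `k`. -/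
def PartialReach : ℕ → List α → List α → Prop
  | 0, s, t => t = s
  | k+1, s, t => ∃ u, PartialStep s u ∧ PartialReach k u t

/-- `t` is obtained from `s` by a full merge sequence of length `k`. -/
def FullReach : ℕ → List α → List α → Prop
  | 0, s, t => t = s
  | k+1, s, t => ∃ u, FullStep s u ∧ FullReach k u t

/-- `t` is obtained from `s` by a run of BPE with `k` greedy merge rounds. -/
def GreedyReach : ℕ → List α → List α → Prop
  | 0, s, t => t = s
  | k+1, s, t => ∃ u, GreedyStep s u ∧ GreedyReach k u t

/-- Optimal utility of partial merge sequences of length `k` (the OPE optimum). -/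
noncomputable def OPT (s : List α) (k : ℕ) : ℕ :=
  sSup {u : ℕ | ∃ t : List α, PartialReach k s t ∧ u = s.length - t.length}

/-- Optimal utility of full merge sequences of length `k` (the OMS optimum). -/
noncomputable def OPTm (s : List α) (k : ℕ) : ℕ :=
  sSup {u : ℕ | ∃ t : List α, FullReach k s t ∧ u = s.length - t.length}

/-- A pair packing: non-overlapping indices at which a common pair occurs in `s`
(0-based indices). -/
def IsPairPacking (s : List α) (P : Finset ℕ) : Prop :=
  (∀ i ∈ P, i + 1 < s.length) ∧
  (∀ i ∈ P, ∀ j ∈ P, i ≠ j → 2 ≤ Nat.dist i j) ∧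
  ∃ a b : α, ∀ i ∈ P, s[i]? = some a ∧ s[i+1]? = some b

/-- A `k`-packing: a disjoint union of `k` pair packings. -/
def IsKPacking (s : List α) (k : ℕ) (P : Fin k → Finset ℕ) : Prop :=
  (∀ i, IsPairPacking s (P i)) ∧ ∀ i j, i ≠ j → Disjoint (P i) (P j)

/-- `Pk s k`: maximum size of a `k`-packing of `s`. -/
noncomputable def Pk (s : List α) (k : ℕ) : ℕ :=
  sSup {n : ℕ | ∃ P : Fin k → Finset ℕ, IsKPacking s k P ∧ n = ∑ i, (P i).card}

/-- Number of (possibly overlapping) occurrences of the pair `ab` in `s`. -/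
def freq (s : List α) (a b : α) : ℕ :=
  ((Finset.range s.length).filter (fun i => s[i]? = some a ∧ s[i+1]? = some b)).card

/-- `Fk s k`: total number of occurrences of the `k` most frequent pairs in `s`. -/
noncomputable def Fk (s : List α) (k : ℕ) : ℕ :=
  sSup {n : ℕ | ∃ Q : Finset (α × α), Q.card ≤ k ∧ n = ∑ p ∈ Q, freq s p.1 p.2}

set_option linter.unusedSectionVars false
set_option maxHeartbeats 1000000

def phi (c : α) (u : List α) (j : ℕ) : ℕ := j + ((u.take j).count c)
@[simp] theorem phi_zero (c : α) (u : List α) : phi c u 0 = 0 := by simp [phi]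
theorem phi_nil (c : α) (j : ℕ) : phi c ([] : List α) j = j := by simp [phi]
theorem phi_cons_succ (c x : α) (u : List α) (j : ℕ) :
    phi c (x :: u) (j+1) = (if x = c then 2 else 1) + phi c u j := by
  simp [phi, List.count_cons]; split <;> omega

theorem phi_one (c x : α) (u : List α) :
    phi c (x :: u) 1 = if x = c then 2 else 1 := by
  rw [phi_cons_succ, phi_zero]; split <;> rfl

theorem phi_succ_gt (c : α) (u : List α) (j : ℕ) : phi c u j < phi c u (j+1) := by
  induction u generalizing j with
  | nil => simp [phi_nil]
  | cons x u ih =>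
    cases j with
    | zero => rw [phi_one, phi_zero]; split <;> omega
    | succ j => rw [phi_cons_succ, phi_cons_succ]; have := ih j; omega

theorem phi_strictMono (c : α) (u : List α) : StrictMono (phi c u) :=
  strictMono_nat_of_lt_succ (phi_succ_gt c u)

theorem phi_succ_le (c : α) (u : List α) (j : ℕ) : phi c u (j+1) ≤ phi c u j + 2 := by
  induction u generalizing j with
  | nil => simp [phi_nil]
  | cons x u ih =>
    cases j with
    | zero => rw [phi_one, phi_zero]; split <;> omega
    | succ j => rw [phi_cons_succ, phi_cons_succ]; have := ih j; omega

theorem phi_succ_of_ne (c : α) (u : List α) (j : ℕ) (x : α) (h : u[j]? = some x) (hx : x ≠ c) :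
    phi c u (j+1) = phi c u j + 1 := by
  induction u generalizing j with
  | nil => simp at h
  | cons y u ih =>
    cases j with
    | zero => simp at h; subst h; rw [phi_one, phi_zero]; simp [hx]
    | succ j => simp only [List.getElem?_cons_succ] at h
                rw [phi_cons_succ, phi_cons_succ, ih j h]; omega

theorem phi_succ_of_c (c : α) (u : List α) (j : ℕ) (h : u[j]? = some c) :
    phi c u (j+1) = phi c u j + 2 := by
  induction u generalizing j with
  | nil => simp at h
  | cons y u ih =>
    cases j with
    | zero => simp at h; subst h; rw [phi_one, phi_zero]; simp
    | succ j => simp only [List.getElem?_cons_succ] at h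
                rw [phi_cons_succ, phi_cons_succ, ih j h]; omega

theorem expand_cons (a b c x : α) (u : List α) :
    expand a b c (x :: u) = if x = c then a :: b :: expand a b c u else x :: expand a b c u := rfl

theorem getElem?_cons_one_add (z : α) (l : List α) (m : ℕ) : (z :: l)[1 + m]? = l[m]? := by
  rw [Nat.add_comm]; exact List.getElem?_cons_succ

theorem getElem?_cons_two_add (z w : α) (l : List α) (m : ℕ) : (z :: w :: l)[2 + m]? = l[m]? := by
  rw [Nat.add_comm]
  show (z :: w :: l)[(m+1)+1]? = l[m]?
  rw [List.getElem?_cons_succ, List.getElem?_cons_succ]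

theorem expand_length (a b c : α) (u : List α) :
    (expand a b c u).length = phi c u u.length := by
  induction u with
  | nil => simp [expand, phi]
  | cons x u ih =>
    rw [expand_cons, List.length_cons, phi_cons_succ]
    split <;> simp_all <;> omega

theorem get_phi_of_ne (a b c : α) (u : List α) (j : ℕ) (x : α)
    (h : u[j]? = some x) (hx : x ≠ c) :
    (expand a b c u)[phi c u j]? = some x := by
  induction u generalizing j with
  | nil => simp at h
  | cons y u ih =>
    cases j with
    | zero =>
      simp at h; subst h
      rw [phi_zero, expand_cons, if_neg hx]; simp
    | succ j =>
      simp only [List.getElem?_cons_succ] at h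
      rw [phi_cons_succ, expand_cons]
      split
      · rw [getElem?_cons_two_add]; exact ih j h
      · rw [getElem?_cons_one_add]; exact ih j h

theorem get_phi_of_c (a b c : α) (u : List α) (j : ℕ)
    (h : u[j]? = some c) :
    (expand a b c u)[phi c u j]? = some a ∧ (expand a b c u)[phi c u j + 1]? = some b := by
  induction u generalizing j with
  | nil => simp at h
  | cons y u ih =>
    cases j with
    | zero =>
      simp at h; subst h
      rw [phi_zero, expand_cons, if_pos rfl]; simp
    | succ j =>
      simp only [List.getElem?_cons_succ] at h
      rw [phi_cons_succ, expand_cons]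
      split
      · rw [getElem?_cons_two_add, show 2 + phi c u j + 1 = 2 + (phi c u j + 1) by omega,
          getElem?_cons_two_add]
        exact ih j h
      · rw [getElem?_cons_one_add, show 1 + phi c u j + 1 = 1 + (phi c u j + 1) by omega,
          getElem?_cons_one_add]
        exact ih j h

/-- every position of `expand a b c u` is covered -/
theorem expand_cover (a b c : α) (u : List α) (p : ℕ) (hp : p < (expand a b c u).length) :
    ∃ j, j < u.length ∧ (p = phi c u j ∨ (p = phi c u j + 1 ∧ u[j]? = some c)) := by
  induction u generalizing p with
  | nil => simp [expand] at hp
  | cons y u ih =>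
    by_cases hy : y = c
    · subst hy
      rw [expand_cons, if_pos rfl] at hp
      simp only [List.length_cons] at hp
      match p, hp with
      | 0, _ => exact ⟨0, by simp, Or.inl (by simp)⟩
      | 1, _ => exact ⟨0, by simp, Or.inr (by simp [phi_zero])⟩
      | (p+2), hp =>
        obtain ⟨j, hj, hor⟩ := ih p (by simpa using hp)
        refine ⟨j+1, by simpa using hj, ?_⟩
        rw [phi_cons_succ, if_pos rfl]
        rcases hor with h1 | ⟨h1, h2⟩
        · exact Or.inl (by omega)
        · exact Or.inr ⟨by omega, by simpa using h2⟩
    · rw [expand_cons, if_neg hy] at hp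
      simp only [List.length_cons] at hp
      match p, hp with
      | 0, _ => exact ⟨0, by simp, Or.inl (by simp)⟩
      | (p+1), hp =>
        obtain ⟨j, hj, hor⟩ := ih p (by simpa using hp)
        refine ⟨j+1, by simpa using hj, ?_⟩
        rw [phi_cons_succ, if_neg hy]
        rcases hor with h1 | ⟨h1, h2⟩
        · exact Or.inl (by omega)
        · exact Or.inr ⟨by omega, by simpa using h2⟩

theorem expand_replace (a b c : α) (s : List α) (h : c ∉ s) :
    expand a b c (replace a b c s) = s := by
  induction s using replace.induct a b with
  | case1 => simp [replace, expand]
  | case2 x => simp_all [replace, expand]; rintro rfl; simp at h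
  | case3 x y rest hxy ih =>
    simp only [List.mem_cons, not_or] at h
    simp [replace, expand, hxy.1, hxy.2, ih h.2.2]
  | case4 x y rest hxy ih =>
    simp only [List.mem_cons, not_or] at h
    have hx : ¬ (x = c) := fun hh => h.1 hh.symm
    simp only [replace, if_neg hxy, expand, if_neg hx, List.cons.injEq, true_and]
    exact ih (by simp [h.2.1, h.2.2])

theorem replace_length_le (a b c : α) (s : List α) : (replace a b c s).length ≤ s.length := by
  induction s using replace.induct a b with
  | case1 => simp [replace]
  | case2 x => simp [replace]
  | case3 x y rest hxy ih => rw [replace, if_pos hxy]; simp; omega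
  | case4 x y rest hxy ih => rw [replace, if_neg hxy]; simp at ih ⊢; omega

theorem replace_head (a b c y : α) (l : List α) :
    ∃ w r, replace a b c (y :: l) = w :: r ∧ (w = y ∨ w = c) := by
  match l with
  | [] => exact ⟨y, [], by simp [replace], Or.inl rfl⟩
  | z :: l =>
    rw [replace]
    split
    · exact ⟨c, _, rfl, Or.inr rfl⟩
    · exact ⟨y, _, rfl, Or.inl rfl⟩

theorem no_ab_replace (a b c : α) (s : List α) (ha : a ≠ c) (hb : b ≠ c) (j : ℕ) :
    ¬((replace a b c s)[j]? = some a ∧ (replace a b c s)[j+1]? = some b) := by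
  induction s using replace.induct a b generalizing j with
  | case1 => simp [replace]
  | case2 x => simp [replace]
  | case3 x y rest hxy ih =>
    rw [replace, if_pos hxy]
    cases j with
    | zero =>
      rintro ⟨h1, -⟩
      simp at h1; exact ha h1.symm
    | succ j =>
      simp only [List.getElem?_cons_succ]
      exact ih j
  | case4 x y rest hxy ih =>
    rw [replace, if_neg hxy]
    cases j with
    | zero =>
      rintro ⟨h1, h2⟩
      simp only [List.getElem?_cons_zero, Option.some.injEq] at h1
      obtain ⟨w, r, hw, hwy⟩ := replace_head a b c y rest
      rw [hw] at h2
      simp at h2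
      rcases hwy with rfl | rfl
      · exact hxy ⟨h1, h2⟩
      · exact hb h2.symm
    | succ j =>
      simp only [List.getElem?_cons_succ]
      exact ih j

theorem matching_bound (a b c : α) (s : List α) (P : Finset ℕ)
    (hocc : ∀ i ∈ P, s[i]? = some a ∧ s[i+1]? = some b)
    (hdist : ∀ i ∈ P, ∀ j ∈ P, i ≠ j → 2 ≤ Nat.dist i j) :
    (replace a b c s).length + P.card ≤ s.length := by
  induction s using replace.induct a b generalizing P with
  | case1 =>
    have hP : P = ∅ := by
      apply Finset.eq_empty_of_forall_notMem
      intro i hi; have := (hocc i hi).1; simp at this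
    simp [replace, hP]
  | case2 x =>
    have hP : P = ∅ := by
      apply Finset.eq_empty_of_forall_notMem
      intro i hi
      have h2 := (hocc i hi).2
      rcases i with _ | n <;> simp at h2
    simp [replace, hP]
  | case3 x y rest hxy ih =>
    rw [replace, if_pos hxy]
    set P₂ := (P.filter (fun i => 2 ≤ i)).image (fun i => i - 2) with hP₂
    have hmem : ∀ i' ∈ P₂, ∃ i ∈ P, 2 ≤ i ∧ i' = i - 2 := by
      intro i' hi'
      simp only [hP₂, Finset.mem_image, Finset.mem_filter] at hi'
      obtain ⟨i, ⟨hiP, hi2⟩, rfl⟩ := hi'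
      exact ⟨i, hiP, hi2, rfl⟩
    have hshift : ∀ m : ℕ, (x :: y :: rest)[m+1+1]? = rest[m]? := by
      intro m; rw [List.getElem?_cons_succ, List.getElem?_cons_succ]
    have h1 : (replace a b c rest).length + P₂.card ≤ rest.length := by
      apply ih
      · intro i' hi'
        obtain ⟨i, hiP, hi2, rfl⟩ := hmem i' hi'
        obtain ⟨ho1, ho2⟩ := hocc i hiP
        rw [show i = i-2+1+1 by omega, hshift] at ho1
        rw [show i+1 = (i-2+1)+1+1 by omega, hshift] at ho2
        exact ⟨ho1, ho2⟩
      · intro i' hi' j' hj' hne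
        obtain ⟨i, hiP, hi2, rfl⟩ := hmem i' hi'
        obtain ⟨j, hjP, hj2, rfl⟩ := hmem j' hj'
        have hd := hdist i hiP j hjP (by omega)
        simp only [Nat.dist] at hd ⊢
        omega
    have hc1 : (P.filter (fun i => ¬ 2 ≤ i)).card ≤ 1 := by
      apply Finset.card_le_one.mpr
      intro i hi j hj
      simp only [Finset.mem_filter] at hi hj
      by_contra hne
      have hd := hdist i hi.1 j hj.1 hne
      simp only [Nat.dist] at hd
      omega
    have hc2 : P₂.card = (P.filter (fun i => 2 ≤ i)).card := by
      rw [hP₂, Finset.card_image_of_injOn]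
      intro i hi j hj hij
      simp only [Finset.coe_filter, Set.mem_setOf_eq] at hi hj
      simp only at hij
      omega
    have hc3 := Finset.card_filter_add_card_filter_not (s := P) (p := fun i => 2 ≤ i)
    simp only [List.length_cons]
    omega
  | case4 x y rest hxy ih =>
    rw [replace, if_neg hxy]
    have h0 : 0 ∉ P := by
      intro h0
      obtain ⟨ha, hb⟩ := hocc 0 h0
      simp at ha hb
      exact hxy ⟨ha, hb⟩
    set P₁ := P.image (fun i => i - 1) with hP₁
    have hmem : ∀ i' ∈ P₁, ∃ i ∈ P, 1 ≤ i ∧ i' = i - 1 := by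
      intro i' hi'
      simp only [hP₁, Finset.mem_image] at hi'
      obtain ⟨i, hiP, rfl⟩ := hi'
      have : i ≠ 0 := fun h => h0 (h ▸ hiP)
      exact ⟨i, hiP, by omega, rfl⟩
    have hshift : ∀ m : ℕ, (x :: y :: rest)[m+1]? = (y :: rest)[m]? := by
      intro m; rw [List.getElem?_cons_succ]
    have h1 : (replace a b c (y :: rest)).length + P₁.card ≤ (y :: rest).length := by
      apply ih
      · intro i' hi'
        obtain ⟨i, hiP, hi1, rfl⟩ := hmem i' hi'
        obtain ⟨ho1, ho2⟩ := hocc i hiP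
        rw [show i = i-1+1 by omega, hshift] at ho1
        rw [show i+1 = (i-1+1)+1 by omega, hshift] at ho2
        exact ⟨ho1, ho2⟩
      · intro i' hi' j' hj' hne
        obtain ⟨i, hiP, hi1, rfl⟩ := hmem i' hi'
        obtain ⟨j, hjP, hj1, rfl⟩ := hmem j' hj'
        have hd := hdist i hiP j hjP (by omega)
        simp only [Nat.dist] at hd ⊢
        omega
    have hcard : P.card = P₁.card := by
      rw [hP₁, eq_comm, Finset.card_image_of_injOn]
      intro i hi j hj hij
      simp only [Finset.mem_coe] at hi hj
      have h1 : i ≠ 0 := fun h => h0 (h ▸ hi)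
      have h2 : j ≠ 0 := fun h => h0 (h ▸ hj)
      simp only at hij
      omega
    simp only [List.length_cons] at h1 ⊢
    omega

theorem cpos_card (c : α) (u : List α) :
    ((Finset.range u.length).filter (fun j => u[j]? = some c)).card = u.count c := by
  induction u with
  | nil => simp
  | cons x u ih =>
    rw [Finset.card_filter] at ih ⊢
    rw [List.length_cons, Finset.sum_range_succ']
    simp only [List.getElem?_cons_succ, List.getElem?_cons_zero, List.count_cons, ih,
      Option.some.injEq]
    rcases eq_or_ne x c with rfl | hxc
    · simp
    · simp [hxc, Ne.symm hxc]

/-- boundary map: `u`-boundary `j` (between `j` and `j+1`) to `s`-position. -/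
def psi (c : α) (u : List α) (j : ℕ) : ℕ :=
  if u[j]? = some c then phi c u j + 1 else phi c u j

theorem phi_le_psi (c : α) (u : List α) (j : ℕ) : phi c u j ≤ psi c u j := by
  unfold psi; split <;> omega

theorem psi_lt_phi_succ (c : α) (u : List α) (j : ℕ) : psi c u j < phi c u (j+1) := by
  unfold psi; split
  · rename_i h; rw [phi_succ_of_c c u j h]; omega
  · exact phi_succ_gt c u j

theorem psi_strictMono (c : α) (u : List α) : StrictMono (psi c u) := by
  intro j j' h
  calc psi c u j < phi c u (j+1) := psi_lt_phi_succ c u j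
    _ ≤ phi c u j' := (phi_strictMono c u).monotone h
    _ ≤ psi c u j' := phi_le_psi c u j'

theorem psi_gap (c : α) (u : List α) (j j' : ℕ) (h : j + 2 ≤ j') : psi c u j + 2 ≤ psi c u j' := by
  have h1 := psi_lt_phi_succ c u j
  have h2 : phi c u (j+1) < phi c u (j+2) := phi_succ_gt c u (j+1)
  have h3 : phi c u (j+2) ≤ phi c u j' := (phi_strictMono c u).monotone h
  have h4 := phi_le_psi c u j'
  omega

theorem psi_succ_eq_phi_succ (c : α) (u : List α) (j : ℕ) (hlt : j < u.length) :
    psi c u j + 1 = phi c u (j+1) := by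
  unfold psi; split
  · rename_i h; rw [phi_succ_of_c c u j h]
  · rename_i h
    have hj : u[j]? = some (u[j]) := List.getElem?_eq_getElem hlt
    exact (phi_succ_of_ne c u j (u[j]) hj (fun hxc => h (hxc ▸ hj))).symm

theorem getElem?_some_lt {l : List α} {j : ℕ} {x : α} (h : l[j]? = some x) : j < l.length := by
  by_contra hc
  push_neg at hc
  rw [List.getElem?_eq_none hc] at h
  simp at h

theorem phi_mono (c : α) (u : List α) : Monotone (phi c u) := (phi_strictMono c u).monotone

theorem phi_inj (c : α) (u : List α) : Function.Injective (phi c u) := (phi_strictMono c u).injective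

theorem expand_len_eq (a b c : α) (u : List α) :
    (expand a b c u).length = u.length + u.count c := by
  rw [expand_length, phi, List.take_length]

theorem pack_phi_cpos (a b c : α) (u : List α) :
    IsPairPacking (expand a b c u)
      (((Finset.range u.length).filter (fun j => u[j]? = some c)).image (phi c u)) := by
  have hlen := expand_length a b c u
  have hcmem : ∀ j ∈ (Finset.range u.length).filter (fun j => u[j]? = some c),
      j < u.length ∧ u[j]? = some c := by
    intro j hj; simpa using hj
  refine ⟨?_, ?_, a, b, ?_⟩
  · intro p hp
    obtain ⟨j, hj, rfl⟩ := Finset.mem_image.mp hp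
    obtain ⟨hjn, hjc⟩ := hcmem j hj
    have h1 : phi c u (j+1) = phi c u j + 2 := phi_succ_of_c c u j hjc
    have h2 : phi c u (j+1) ≤ phi c u u.length := phi_mono c u (by omega)
    omega
  · intro p hp q hq hne
    obtain ⟨j, hj, rfl⟩ := Finset.mem_image.mp hp
    obtain ⟨j', hj', rfl⟩ := Finset.mem_image.mp hq
    obtain ⟨hjn, hjc⟩ := hcmem j hj
    obtain ⟨hjn', hjc'⟩ := hcmem j' hj'
    simp only [Nat.dist]
    rcases Nat.lt_trichotomy j j' with h | h | h
    · have h1 : phi c u (j+1) ≤ phi c u j' := phi_mono c u (by omega)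
      have h2 := phi_succ_of_c c u j hjc
      omega
    · exact absurd (by rw [h]) hne
    · have h1 : phi c u (j'+1) ≤ phi c u j := phi_mono c u (by omega)
      have h2 := phi_succ_of_c c u j' hjc'
      omega
  · intro p hp
    obtain ⟨j, hj, rfl⟩ := Finset.mem_image.mp hp
    exact get_phi_of_c a b c u j (hcmem j hj).2

theorem pack_psi_image (a b c : α) (u : List α) (p : Finset ℕ)
    (hp : IsPairPacking u p) : IsPairPacking (expand a b c u) (p.image (psi c u)) := by
  obtain ⟨hlt, hdist, x, y, hxy⟩ := hp
  have hlen : (expand a b c u).length = phi c u u.length := expand_length a b c u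
  refine ⟨?_, ?_, (if x = c then b else x), (if y = c then a else y), ?_⟩
  · intro q hq
    obtain ⟨j, hj, rfl⟩ := Finset.mem_image.mp hq
    have h1 : j + 1 < u.length := hlt j hj
    have h2 : psi c u j + 1 = phi c u (j+1) := psi_succ_eq_phi_succ c u j (by omega)
    have h3 : phi c u (j+1) < phi c u u.length := phi_strictMono c u (by omega)
    omega
  · intro q hq q' hq' hne
    obtain ⟨j, hj, rfl⟩ := Finset.mem_image.mp hq
    obtain ⟨j', hj', rfl⟩ := Finset.mem_image.mp hq'
    have hjj : j ≠ j' := fun h => hne (by rw [h])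
    have hd := hdist j hj j' hj' hjj
    simp only [Nat.dist] at hd ⊢
    rcases Nat.lt_or_ge j j' with h | h
    · have := psi_gap c u j j' (by omega); omega
    · have := psi_gap c u j' j (by omega); omega
  · intro q hq
    obtain ⟨j, hj, rfl⟩ := Finset.mem_image.mp hq
    obtain ⟨hjx, hjy⟩ := hxy j hj
    have h1 : j + 1 < u.length := hlt j hj
    have h2 : psi c u j + 1 = phi c u (j+1) := psi_succ_eq_phi_succ c u j (by omega)
    constructor
    · by_cases hxc : x = c
      · have hjc : u[j]? = some c := hxc ▸ hjx
        have e : psi c u j = phi c u j + 1 := by unfold psi; rw [if_pos hjc]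
        rw [if_pos hxc, e]
        exact (get_phi_of_c a b c u j hjc).2
      · have e : psi c u j = phi c u j := by
          unfold psi
          rw [if_neg (fun h => hxc (by rw [hjx] at h; exact (Option.some_inj.mp h)))]
        rw [if_neg hxc, e]
        exact get_phi_of_ne a b c u j x hjx hxc
    · rw [h2]
      by_cases hyc : y = c
      · have hjc : u[j+1]? = some c := hyc ▸ hjy
        rw [if_pos hyc]
        exact (get_phi_of_c a b c u (j+1) hjc).1
      · rw [if_neg hyc]
        exact get_phi_of_ne a b c u (j+1) y hjy hyc

theorem disj_phi_psi (c : α) (u : List α) (p : Finset ℕ) :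
    Disjoint (((Finset.range u.length).filter (fun j => u[j]? = some c)).image (phi c u))
      (p.image (psi c u)) := by
  rw [Finset.disjoint_left]
  intro q hq hq'
  obtain ⟨j0, hj0, hphi⟩ := Finset.mem_image.mp hq
  obtain ⟨j1, hj1, hpsi⟩ := Finset.mem_image.mp hq'
  simp only [Finset.mem_filter, Finset.mem_range] at hj0
  by_cases h1c : u[j1]? = some c
  · have e1 : psi c u j1 = phi c u j1 + 1 := by unfold psi; rw [if_pos h1c]
    have e2 : phi c u (j1+1) = phi c u j1 + 2 := phi_succ_of_c c u j1 h1c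
    rcases Nat.lt_trichotomy j0 j1 with h | h | h
    · have := phi_strictMono c u h; omega
    · subst h; omega
    · have : phi c u (j1+1) ≤ phi c u j0 := phi_mono c u (by omega)
      omega
  · have e1 : psi c u j1 = phi c u j1 := by unfold psi; rw [if_neg h1c]
    have hj01 : j0 = j1 := phi_inj c u (by omega)
    exact h1c (hj01 ▸ hj0.2)

theorem partial_step_pack (a b c : α) (u : List α) (k : ℕ) (P : Fin k → Finset ℕ)
    (hP : IsKPacking u k P) :
    ∃ Q : Fin (k+1) → Finset ℕ, IsKPacking (expand a b c u) (k+1) Q ∧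
      (expand a b c u).length + ∑ i, (P i).card = u.length + ∑ i, (Q i).card := by
  classical
  obtain ⟨hpp, hdisj⟩ := hP
  refine ⟨Fin.cons (((Finset.range u.length).filter (fun j => u[j]? = some c)).image (phi c u))
    (fun i => (P i).image (psi c u)), ⟨?_, ?_⟩, ?_⟩
  · intro i
    rcases Fin.eq_zero_or_eq_succ i with rfl | ⟨i', rfl⟩
    · rw [Fin.cons_zero]; exact pack_phi_cpos a b c u
    · rw [Fin.cons_succ]; exact pack_psi_image a b c u (P i') (hpp i')
  · intro i j hij
    rcases Fin.eq_zero_or_eq_succ i with rfl | ⟨i', rfl⟩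
    · rcases Fin.eq_zero_or_eq_succ j with rfl | ⟨j', rfl⟩
      · exact absurd rfl hij
      · rw [Fin.cons_zero, Fin.cons_succ]; exact disj_phi_psi c u (P j')
    · rcases Fin.eq_zero_or_eq_succ j with rfl | ⟨j', rfl⟩
      · rw [Fin.cons_zero, Fin.cons_succ]; exact (disj_phi_psi c u (P i')).symm
      · rw [Fin.cons_succ, Fin.cons_succ]
        have hij' : i' ≠ j' := fun h => hij (by rw [h])
        exact (Finset.disjoint_image (psi_strictMono c u).injective).mpr (hdisj i' j' hij')
  · rw [Fin.sum_univ_succ]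
    simp only [Fin.cons_zero, Fin.cons_succ]
    have h0 : ((((Finset.range u.length).filter (fun j => u[j]? = some c))).image (phi c u)).card
        = u.count c := by
      rw [Finset.card_image_of_injective _ (phi_inj c u), cpos_card]
    have hqi : ∀ i, ((P i).image (psi c u)).card = (P i).card := fun i =>
      Finset.card_image_of_injective _ (psi_strictMono c u).injective
    rw [expand_len_eq]
    simp only [hqi]
    omega

/-- pull back a packing of `expand a b c v` to a packing of `v` (survivors only) -/
def pull (c : α) (v : List α) (p : Finset ℕ) : Finset ℕ :=
  (Finset.range v.length).filter
    (fun j => j + 1 < v.length ∧ phi c v j ∈ p ∧ v[j]? ≠ some c ∧ v[j+1]? ≠ some c)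

def kcen (c : α) (v : List α) : Finset ℕ :=
  ((Finset.range v.length).filter (fun j => v[j]? = some c)).image (phi c v)

def kside (c : α) (v : List α) : Finset ℕ :=
  ((Finset.range v.length).filter (fun j => v[j]? = some c)).biUnion
    (fun j => {phi c v j - 1, phi c v j + 1})

theorem kcen_card (c : α) (v : List α) : (kcen c v).card ≤ v.count c := by
  unfold kcen
  rw [Finset.card_image_of_injective _ (phi_inj c v), cpos_card]

theorem kside_card (c : α) (v : List α) : (kside c v).card ≤ 2 * v.count c := by
  unfold kside
  calc _ ≤ ∑ _j ∈ (Finset.range v.length).filter (fun j => v[j]? = some c), 2 := by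
        apply le_trans (Finset.card_biUnion_le)
        apply Finset.sum_le_sum
        intro j _
        apply le_trans (Finset.card_insert_le _ _)
        simp
    _ ≤ 2 * v.count c := by rw [Finset.sum_const, ← cpos_card (c := c)]; simp [Nat.mul_comm]

theorem pull_mem {c : α} {v : List α} {p : Finset ℕ} {j : ℕ} (h : j ∈ pull c v p) :
    j + 1 < v.length ∧ phi c v j ∈ p ∧ v[j]? ≠ some c ∧ v[j+1]? ≠ some c := by
  simpa [pull] using ((Finset.mem_filter.mp h).2)

theorem pull_get {c : α} {v : List α} {j : ℕ} (a b : α)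
    (hj : j + 1 < v.length) (h1 : v[j]? ≠ some c) (h2 : v[j+1]? ≠ some c) :
    (expand a b c v)[phi c v j]? = v[j]? ∧ (expand a b c v)[phi c v j + 1]? = v[j+1]? := by
  have hx : v[j]? = some (v[j]'(by omega)) := List.getElem?_eq_getElem (by omega)
  have hy : v[j+1]? = some (v[j+1]'hj) := List.getElem?_eq_getElem hj
  have hxc : v[j]'(by omega) ≠ c := fun h => h1 (by rw [hx, h])
  have hyc : v[j+1]'hj ≠ c := fun h => h2 (by rw [hy, h])
  have e1 : phi c v (j+1) = phi c v j + 1 := phi_succ_of_ne c v j _ hx hxc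
  constructor
  · rw [hx]; exact get_phi_of_ne a b c v j _ hx hxc
  · rw [hy, ← e1]; exact get_phi_of_ne a b c v (j+1) _ hy hyc

theorem pull_pack (a b c : α) (v : List α) (p : Finset ℕ)
    (hp : IsPairPacking (expand a b c v) p) : IsPairPacking v (pull c v p) := by
  obtain ⟨hlt, hdist, x, y, hxy⟩ := hp
  refine ⟨fun j hj => (pull_mem hj).1, ?_, x, y, ?_⟩
  · intro j hj j' hj' hne
    obtain ⟨hj1, hjp, hjc, _⟩ := pull_mem hj
    obtain ⟨hj1', hjp', hjc', _⟩ := pull_mem hj'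
    have hpne : phi c v j ≠ phi c v j' := fun h => hne (phi_inj c v h)
    have hd := hdist _ hjp _ hjp' hpne
    have e1 : phi c v (j+1) = phi c v j + 1 := by
      have hx : v[j]? = some (v[j]'(by omega)) := List.getElem?_eq_getElem (by omega)
      exact phi_succ_of_ne c v j _ hx (fun h => hjc (by rw [hx, h]))
    have e1' : phi c v (j'+1) = phi c v j' + 1 := by
      have hx : v[j']? = some (v[j']'(by omega)) := List.getElem?_eq_getElem (by omega)
      exact phi_succ_of_ne c v j' _ hx (fun h => hjc' (by rw [hx, h]))
    simp only [Nat.dist] at hd ⊢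
    rcases Nat.lt_trichotomy j j' with h | h | h
    · have h2 : j' ≠ j + 1 := by
        intro hh
        rw [hh] at hd
        omega
      have : phi c v (j+1) ≤ phi c v j' := phi_mono c v (by omega)
      omega
    · exact absurd h hne
    · have h2 : j ≠ j' + 1 := by
        intro hh
        rw [hh] at hd
        omega
      have : phi c v (j'+1) ≤ phi c v j := phi_mono c v (by omega)
      omega
  · intro j hj
    obtain ⟨hj1, hjp, hjc, hjc'⟩ := pull_mem hj
    obtain ⟨e1, e2⟩ := pull_get a b hj1 hjc hjc'
    obtain ⟨o1, o2⟩ := hxy _ hjp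
    exact ⟨by rw [← e1, o1], by rw [e2] at o2; exact o2⟩

theorem pull_card_le (c : α) (v : List α) (p : Finset ℕ) : (pull c v p).card ≤ p.card := by
  have h : (pull c v p).image (phi c v) ⊆ p := by
    intro q hq
    obtain ⟨j, hj, rfl⟩ := Finset.mem_image.mp hq
    exact (pull_mem hj).2.1
  calc (pull c v p).card = ((pull c v p).image (phi c v)).card :=
        (Finset.card_image_of_injective _ (phi_inj c v)).symm
    _ ≤ p.card := Finset.card_le_card h

theorem pull_disjoint (c : α) (v : List α) (p q : Finset ℕ) (h : Disjoint p q) :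
    Disjoint (pull c v p) (pull c v q) := by
  rw [Finset.disjoint_left] at h ⊢
  intro j hj hj'
  exact h (pull_mem hj).2.1 (pull_mem hj').2.1

theorem pull_card (a b c : α) (v : List α) (p : Finset ℕ)
    (hlt : ∀ i ∈ p, i + 1 < (expand a b c v).length) :
    p.card ≤ (pull c v p).card + (p ∩ (kcen c v ∪ kside c v)).card := by
  have hsub : p ⊆ (pull c v p).image (phi c v) ∪ (p ∩ (kcen c v ∪ kside c v)) := by
    intro q hq
    have hq1 : q + 1 < (expand a b c v).length := hlt q hq
    obtain ⟨j, hjn, hor⟩ := expand_cover a b c v q (by omega)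
    rw [Finset.mem_union]
    rcases hor with rfl | ⟨rfl, hjc⟩
    · -- q = phi j
      by_cases hjc : v[j]? = some c
      · refine Or.inr (Finset.mem_inter.mpr ⟨hq, Finset.mem_union.mpr (Or.inl ?_)⟩)
        exact Finset.mem_image.mpr ⟨j, Finset.mem_filter.mpr ⟨Finset.mem_range.mpr hjn, hjc⟩, rfl⟩
      · have hj1 : j + 1 < v.length := by
          by_contra hcon
          push_neg at hcon
          have hx : v[j]? = some (v[j]'hjn) := List.getElem?_eq_getElem hjn
          have e1 : phi c v (j+1) = phi c v j + 1 :=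
            phi_succ_of_ne c v j _ hx (fun h => hjc (by rw [hx, h]))
          have e2 : phi c v v.length ≤ phi c v (j+1) := phi_mono c v hcon
          rw [← expand_length a b c v] at e2
          omega
        by_cases hjc' : v[j+1]? = some c
        · refine Or.inr (Finset.mem_inter.mpr ⟨hq, Finset.mem_union.mpr (Or.inr ?_)⟩)
          unfold kside
          rw [Finset.mem_biUnion]
          refine ⟨j+1, Finset.mem_filter.mpr ⟨Finset.mem_range.mpr hj1, hjc'⟩, ?_⟩
          have hx : v[j]? = some (v[j]'hjn) := List.getElem?_eq_getElem hjn
          have e1 : phi c v (j+1) = phi c v j + 1 :=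
            phi_succ_of_ne c v j _ hx (fun h => hjc (by rw [hx, h]))
          simp [e1]
        · refine Or.inl (Finset.mem_image.mpr ⟨j, ?_, rfl⟩)
          unfold pull
          rw [Finset.mem_filter, Finset.mem_range]
          exact ⟨hjn, hj1, hq, hjc, hjc'⟩
    · -- q = phi j + 1 with v[j] = c
      refine Or.inr (Finset.mem_inter.mpr ⟨hq, Finset.mem_union.mpr (Or.inr ?_)⟩)
      unfold kside
      rw [Finset.mem_biUnion]
      exact ⟨j, Finset.mem_filter.mpr ⟨Finset.mem_range.mpr hjn, hjc⟩, by simp⟩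
  calc p.card ≤ ((pull c v p).image (phi c v) ∪ (p ∩ (kcen c v ∪ kside c v))).card :=
        Finset.card_le_card hsub
    _ ≤ ((pull c v p).image (phi c v)).card + (p ∩ (kcen c v ∪ kside c v)).card :=
        Finset.card_union_le _ _
    _ = (pull c v p).card + (p ∩ (kcen c v ∪ kside c v)).card := by
        rw [Finset.card_image_of_injective _ (phi_inj c v)]

theorem sum_inter_card_le (k : ℕ) (P : Fin k → Finset ℕ)
    (hd : ∀ i j, i ≠ j → Disjoint (P i) (P j)) (T : Finset ℕ) :
    ∑ i, (P i ∩ T).card ≤ T.card := by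
  rw [← Finset.card_biUnion (fun i _ j _ hij =>
    Finset.disjoint_of_subset_left Finset.inter_subset_left
      (Finset.disjoint_of_subset_right Finset.inter_subset_left (hd i j hij)))]
  apply Finset.card_le_card
  intro x hx
  rw [Finset.mem_biUnion] at hx
  obtain ⟨i, _, hx⟩ := hx
  exact (Finset.mem_inter.mp hx).2

theorem pull_empty (a b c : α) (v : List α) (p : Finset ℕ)
    (hpair : ∃ x y : α, ∀ i ∈ p, (expand a b c v)[i]? = some x ∧ (expand a b c v)[i+1]? = some y)
    (hnoab : ∀ j : ℕ, ¬(v[j]? = some a ∧ v[j+1]? = some b))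
    (p₀ : ℕ) (hp₀ : p₀ ∈ p) (hcen : p₀ ∈ kcen c v) :
    pull c v p = ∅ := by
  obtain ⟨x, y, hxy⟩ := hpair
  obtain ⟨j0, hj0, hphi⟩ := Finset.mem_image.mp hcen
  rw [Finset.mem_filter, Finset.mem_range] at hj0
  obtain ⟨hj0n, hj0c⟩ := hj0
  obtain ⟨hsa, hsb⟩ := get_phi_of_c a b c v j0 hj0c
  rw [hphi] at hsa hsb
  obtain ⟨hx0, hy0⟩ := hxy p₀ hp₀
  have hxa : x = a := by rw [hx0] at hsa; exact Option.some_inj.mp hsa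
  have hyb : y = b := by rw [hy0] at hsb; exact Option.some_inj.mp hsb
  apply Finset.eq_empty_of_forall_notMem
  intro j hj
  obtain ⟨hj1, hjp, hjc, hjc'⟩ := pull_mem hj
  obtain ⟨e1, e2⟩ := pull_get a b hj1 hjc hjc'
  obtain ⟨o1, o2⟩ := hxy _ hjp
  refine hnoab j ⟨?_, ?_⟩
  · rw [← e1, o1, hxa]
  · rw [← e2, o2, hyb]

theorem greedy_step_pack (s u : List α) (hg : GreedyStep s u) (k : ℕ)
    (P : Fin (k+1) → Finset ℕ) (hP : IsKPacking s (k+1) P) :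
    ∃ Q : Fin k → Finset ℕ, IsKPacking u k Q ∧
      ∑ i, (P i).card + 3 * u.length ≤ ∑ i, (Q i).card + 3 * s.length := by
  classical
  obtain ⟨⟨a, b, c, hcs, hu⟩, hmin⟩ := hg
  have hex : expand a b c u = s := by rw [hu]; exact expand_replace a b c s hcs
  obtain ⟨hpp, hdisj⟩ := hP
  have hlen : s.length = u.length + u.count c := by rw [← hex, expand_len_eq]
  set d := u.count c with hd
  have hppx : ∀ i, IsPairPacking (expand a b c u) (P i) := by rw [hex]; exact hpp
  have hsize : ∀ i, (P i).card ≤ d := by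
    intro i
    obtain ⟨hlt, hdist, x, y, hxy⟩ := hpp i
    have h1 := matching_bound x y c s (P i) hxy hdist
    have h2 : u.length ≤ (replace x y c s).length := hmin _ ⟨x, y, c, hcs, rfl⟩
    omega
  have hqpack : ∀ i, IsPairPacking u (pull c u (P i)) := fun i =>
    pull_pack a b c u (P i) (hppx i)
  have hcardb : ∀ i, (P i).card ≤ (pull c u (P i)).card + (P i ∩ (kcen c u ∪ kside c u)).card :=
    fun i => pull_card a b c u (P i) (hppx i).1
  have hsplit : ∀ i, (P i ∩ (kcen c u ∪ kside c u)).card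
      ≤ (P i ∩ kcen c u).card + (P i ∩ kside c u).card := by
    intro i
    rw [Finset.inter_union_distrib_left]
    exact Finset.card_union_le _ _
  have hKs : ∑ i, (P i ∩ kside c u).card ≤ 2 * d :=
    le_trans (sum_inter_card_le _ _ hdisj _) (kside_card c u)
  have hKc : ∑ i, (P i ∩ kcen c u).card ≤ d :=
    le_trans (sum_inter_card_le _ _ hdisj _) (kcen_card c u)
  have hsum1 : ∑ i, (P i).card ≤ ∑ i, (pull c u (P i)).card
      + (∑ i, (P i ∩ kcen c u).card + ∑ i, (P i ∩ kside c u).card) := by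
    calc ∑ i, (P i).card
        ≤ ∑ i, ((pull c u (P i)).card + (P i ∩ (kcen c u ∪ kside c u)).card) :=
          Finset.sum_le_sum (fun i _ => hcardb i)
      _ ≤ ∑ i, ((pull c u (P i)).card + ((P i ∩ kcen c u).card + (P i ∩ kside c u).card)) :=
          Finset.sum_le_sum (fun i _ => by have := hsplit i; omega)
      _ = _ := by rw [Finset.sum_add_distrib, Finset.sum_add_distrib]
  by_cases hA : ∃ i₀ p₀, p₀ ∈ P i₀ ∧ p₀ ∈ kcen c u
  · obtain ⟨i₀, p₀, hp₀, hcen⟩ := hA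
    -- a, b occur in s hence differ from c
    have hnoab : ∀ j : ℕ, ¬(u[j]? = some a ∧ u[j+1]? = some b) := by
      obtain ⟨j0, hj0, hphi⟩ := Finset.mem_image.mp hcen
      rw [Finset.mem_filter, Finset.mem_range] at hj0
      obtain ⟨hsa, hsb⟩ := get_phi_of_c a b c u j0 hj0.2
      rw [hex] at hsa hsb
      have ha : a ≠ c := fun h => hcs (h ▸ List.mem_of_getElem? hsa)
      have hb : b ≠ c := fun h => hcs (h ▸ List.mem_of_getElem? hsb)
      rw [hu]
      exact no_ab_replace a b c s ha hb
    have hemp : pull c u (P i₀) = ∅ := by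
      refine pull_empty a b c u (P i₀) ?_ hnoab p₀ hp₀ hcen
      rw [hex]
      exact (hpp i₀).2.2
    refine ⟨fun i => pull c u (P (i₀.succAbove i)), ⟨fun i => hqpack _, ?_⟩, ?_⟩
    · intro i j hij
      exact pull_disjoint c u _ _ (hdisj _ _ (fun h => hij (Fin.succAbove_right_injective h)))
    · have hsum2 : ∑ i : Fin (k+1), (pull c u (P i)).card
          = (pull c u (P i₀)).card + ∑ i : Fin k, (pull c u (P (i₀.succAbove i))).card :=
        Fin.sum_univ_succAbove (fun i => (pull c u (P i)).card) i₀
      rw [hemp] at hsum2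
      simp only [Finset.card_empty, Nat.zero_add] at hsum2
      show ∑ i, (P i).card + 3 * u.length
        ≤ (∑ i : Fin k, (pull c u (P (i₀.succAbove i))).card) + 3 * s.length
      omega
  · push_neg at hA
    have hKc0 : ∀ i, (P i ∩ kcen c u).card = 0 := by
      intro i
      rw [Finset.card_eq_zero, Finset.eq_empty_iff_forall_notMem]
      intro p hp
      rw [Finset.mem_inter] at hp
      exact hA i p hp.1 hp.2
    refine ⟨fun i => pull c u (P ((0 : Fin (k+1)).succAbove i)), ⟨fun i => hqpack _, ?_⟩, ?_⟩
    · intro i j hij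
      exact pull_disjoint c u _ _ (hdisj _ _ (fun h => hij (Fin.succAbove_right_injective h)))
    · have hsum2 : ∑ i : Fin (k+1), (pull c u (P i)).card
          = (pull c u (P 0)).card + ∑ i : Fin k, (pull c u (P ((0 : Fin (k+1)).succAbove i))).card :=
        Fin.sum_univ_succAbove (fun i => (pull c u (P i)).card) 0
      have hp0 : (pull c u (P 0)).card ≤ d := le_trans (pull_card_le c u (P 0)) (hsize 0)
      have hKc0s : ∑ i, (P i ∩ kcen c u).card = 0 := by
        apply Finset.sum_eq_zero
        intro i _
        exact hKc0 i
      show ∑ i, (P i).card + 3 * u.length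
        ≤ (∑ i : Fin k, (pull c u (P ((0 : Fin (k+1)).succAbove i))).card) + 3 * s.length
      omega

theorem partial_reach_pack (k : ℕ) (s t : List α) (h : PartialReach k s t) :
    ∃ P : Fin k → Finset ℕ, IsKPacking s k P ∧ s.length ≤ t.length + ∑ i, (P i).card := by
  induction k generalizing s with
  | zero =>
    refine ⟨fun i => i.elim0, ⟨fun i => i.elim0, fun i => i.elim0⟩, ?_⟩
    rw [show t = s from h]
    simp
  | succ k ih =>
    obtain ⟨u, ⟨a, b, c, hex⟩, hreach⟩ := h
    obtain ⟨P, hP, hle⟩ := ih u hreach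
    obtain ⟨Q, hQ, hsum⟩ := partial_step_pack a b c u k P hP
    rw [hex] at hQ hsum
    exact ⟨Q, hQ, by omega⟩

theorem greedy_reach_bound (k : ℕ) (s t : List α) (h : GreedyReach k s t)
    (P : Fin k → Finset ℕ) (hP : IsKPacking s k P) :
    ∑ i, (P i).card + 3 * t.length ≤ 3 * s.length := by
  induction k generalizing s with
  | zero => rw [show t = s from h]; simp
  | succ k ih =>
    obtain ⟨u, hgs, hreach⟩ := h
    obtain ⟨Q, hQ, hsum⟩ := greedy_step_pack s u hgs k P hP
    have := ih u hreach Q hQ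
    omega

theorem greedy_reach_len (k : ℕ) (s t : List α) (h : GreedyReach k s t) :
    t.length ≤ s.length := by
  induction k generalizing s with
  | zero => rw [show t = s from h]
  | succ k ih =>
    obtain ⟨u, ⟨⟨a, b, c, hcs, hu⟩, -⟩, hreach⟩ := h
    subst hu
    have h1 := ih _ hreach
    have h2 := replace_length_le a b c s
    omega

theorem stmt7_aux (s t : List α) (k : ℕ) (h : GreedyReach k s t) :
    sSup {u : ℕ | ∃ t : List α, PartialReach k s t ∧ u = s.length - t.length}
      ≤ 3 * (s.length - t.length) := by
  apply csSup_le'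
  rw [mem_upperBounds]
  rintro n ⟨t', hre, rfl⟩
  obtain ⟨P, hP, hlen1⟩ := partial_reach_pack k s t' hre
  have h2 := greedy_reach_bound k s t h P hP
  have h3 := greedy_reach_len k s t h
  omega


/-- BPE is a `1/3`-approximation for OPE: any run of BPE with `k`
rounds has utility at least `OPT(s,k)/3`. -/
theorem stmt7 {α : Type*} [DecidableEq α] (s t : List α) (k : ℕ)
    (h : GreedyReach k s t) :
    OPT s k ≤ 3 * (s.length - t.length) := by
  unfold OPT
  exact stmt7_aux s t k h
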